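/- Let Q be an even-dimensional ℂ-vector space with a nondegenerate symmetric bilinear form, and let c : Q → Q be a self-adjoint linear map with pairwise distinct eigenvalues (regular semisimple). For a Lagrangian subspace L ⊆ Q, let c_L : L → Q/L be the composition of c|_L with the quotient map. Then the minimum over all Lagrangians L of rank(c_L) equals 1. -/

import Mathlib

/-- Let `Q` be an even-dimensional complex vector space with a nondegenerate
symmetric bilinear form `B`, and `c : Q → Q` self-adjoint with pairwise distinct
eigenvalues (it diagonalizes in a basis `b` with distinct eigenvalues `μ`).
Then the minimum over Lagrangian subspaces `L` of the rank of the
composition `c_L : L → Q → Q/L` equals `1`. -/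
theorem stmt3 (Q : Type*) [AddCommGroup Q] [Module ℂ Q] [FiniteDimensional ℂ Q]
    (ℓ : ℕ) (hℓ : Module.finrank ℂ Q = ℓ) (hev : Even ℓ) (hpos : 0 < ℓ)
    (B : Q →ₗ[ℂ] Q →ₗ[ℂ] ℂ)
    (hsymm : ∀ u v, B u v = B v u)
    (hnd : ∀ u, (∀ v, B u v = 0) → u = 0)
    (c : Q →ₗ[ℂ] Q)
    (hsa : ∀ u v, B (c u) v = B u (c v))
    (b : Module.Basis (Fin ℓ) ℂ Q) (μ : Fin ℓ → ℂ) (hμ : Function.Injective μ)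
    (heig : ∀ i, c (b i) = μ i • b i) :
    IsLeast {r : ℕ | ∃ L : Submodule ℂ Q,
      (∀ u ∈ L, ∀ v ∈ L, B u v = 0) ∧
      Module.finrank ℂ L = ℓ / 2 ∧
      Module.finrank ℂ (LinearMap.range (L.mkQ.comp (c.domRestrict L))) = r} 1 := by
  classical
  obtain ⟨m, hm⟩ := hev
  obtain ⟨n, hn⟩ : ∃ n, ℓ = n + 1 := ⟨ℓ - 1, by omega⟩
  subst hn
  -- orthogonality of the eigenbasis
  have horth : ∀ i j : Fin (n+1), i ≠ j → B (b i) (b j) = 0 := by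
    intro i j hij
    have h1 : μ i * B (b i) (b j) = μ j * B (b i) (b j) := by
      have h := hsa (b i) (b j)
      rw [heig i, heig j] at h
      simpa [smul_eq_mul, mul_comm] using h
    have h2 : (μ i - μ j) * B (b i) (b j) = 0 := by linear_combination h1
    rcases mul_eq_zero.mp h2 with h | h
    · exact absurd (hμ (sub_eq_zero.mp h)) hij
    · exact h
  -- the diagonal values are nonzero
  have hd : ∀ i, B (b i) (b i) ≠ 0 := by
    intro i hdi
    apply b.ne_zero i
    apply hnd
    intro u
    rw [← b.sum_repr u, map_sum]
    apply Finset.sum_eq_zero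
    intro j _
    have hz : B (b i) (b j) = 0 := by
      rcases eq_or_ne i j with rfl | hij
      · exact hdi
      · exact horth i j hij
    rw [map_smul, hz, smul_zero]
  -- Part 1: lower bound, every Lagrangian has rank ≥ 1
  have hlow : ∀ r : ℕ, (∃ L : Submodule ℂ Q,
      (∀ u ∈ L, ∀ v ∈ L, B u v = 0) ∧
      Module.finrank ℂ L = (n+1) / 2 ∧
      Module.finrank ℂ (LinearMap.range (L.mkQ.comp (c.domRestrict L))) = r) → 1 ≤ r := by
    rintro r ⟨L, hiso, hrankL, hr⟩
    by_contra hr1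
    have hr0 : r = 0 := by omega
    have hrange : LinearMap.range (L.mkQ.comp (c.domRestrict L)) = ⊥ :=
      Submodule.finrank_eq_zero.mp (by rw [hr, hr0])
    have hinv : ∀ x ∈ L, c x ∈ L := by
      intro x hx
      have hmem : L.mkQ (c x) ∈ LinearMap.range (L.mkQ.comp (c.domRestrict L)) :=
        ⟨⟨x, hx⟩, rfl⟩
      rw [hrange, Submodule.mem_bot] at hmem
      rwa [Submodule.mkQ_apply, Submodule.Quotient.mk_eq_zero] at hmem
    have hLpos : 0 < Module.finrank ℂ L := by rw [hrankL]; omega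
    haveI : Nontrivial L := Module.nontrivial_of_finrank_pos hLpos
    obtain ⟨t, ht⟩ := Module.End.exists_eigenvalue (c.restrict hinv)
    obtain ⟨x, hx⟩ := ht.exists_hasEigenvector
    have hcx : c (x : Q) = t • (x : Q) := by
      have h := hx.apply_eq_smul
      calc c (x : Q) = ((c.restrict hinv) x : Q) := (LinearMap.restrict_coe_apply _ _ _).symm
        _ = ((t • x : L) : Q) := by rw [h]
        _ = t • (x : Q) := rfl
    set v : Q := (x : Q) with hv_def
    have hvL : v ∈ L := x.2
    have hvne : v ≠ 0 := fun h => hx.2 (by rwa [hv_def, ZeroMemClass.coe_eq_zero] at h)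
    set g : Fin (n+1) → ℂ := fun i => b.repr v i with hg
    have hsum : ∑ i, g i • b i = v := b.sum_repr v
    have hcoef : ∀ i, g i * μ i - t * g i = 0 := by
      have h1 : c v = ∑ i, (g i * μ i) • b i := by
        rw [← hsum, map_sum]
        exact Finset.sum_congr rfl fun i _ => by rw [map_smul, heig i, smul_smul]
      have h2 : t • v = ∑ i, (t * g i) • b i := by
        rw [← hsum, Finset.smul_sum]
        exact Finset.sum_congr rfl fun i _ => by rw [smul_smul]
      have hz : ∑ i, (g i * μ i - t * g i) • b i = 0 := by
        have hsplit : ∑ i, (g i * μ i - t * g i) • b i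
            = (∑ i, (g i * μ i) • b i) - (∑ i, (t * g i) • b i) := by
          rw [← Finset.sum_sub_distrib]
          exact Finset.sum_congr rfl fun i _ => sub_smul _ _ _
        rw [hsplit, ← h1, ← h2, hcx, sub_self]
      exact Fintype.linearIndependent_iff.mp b.linearIndependent _ hz
    obtain ⟨i0, hi0⟩ : ∃ i0, g i0 ≠ 0 := by
      by_contra h
      push_neg at h
      apply hvne
      rw [← hsum]
      exact Finset.sum_eq_zero fun i _ => by rw [h i, zero_smul]
    have hti0 : t = μ i0 := by
      have h2 : g i0 * (μ i0 - t) = 0 := by linear_combination hcoef i0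
      rcases mul_eq_zero.mp h2 with h | h
      · exact absurd h hi0
      · rw [sub_eq_zero] at h; exact h.symm
    have hgj : ∀ j, j ≠ i0 → g j = 0 := by
      intro j hj
      have h2 : g j * (μ j - t) = 0 := by linear_combination hcoef j
      rcases mul_eq_zero.mp h2 with h | h
      · exact h
      · exact absurd (hμ (by rw [sub_eq_zero] at h; rw [h, hti0])) hj
    have hv_eq : v = g i0 • b i0 := by
      rw [← hsum, Finset.sum_eq_single i0]
      · intro j _ hj; rw [hgj j hj, zero_smul]
      · intro h; exact absurd (Finset.mem_univ i0) h
    have hBvv : B v v = g i0 * (g i0 * B (b i0) (b i0)) := by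
      rw [hv_eq]
      simp only [map_smul, LinearMap.smul_apply, smul_eq_mul]
    have h0 : B v v = 0 := hiso v hvL v hvL
    rw [hBvv] at h0
    rcases mul_eq_zero.mp h0 with h | h
    · exact hi0 h
    rcases mul_eq_zero.mp h with h | h
    · exact hi0 h
    · exact hd i0 h
  -- Part 2: construct a Lagrangian of rank 1
  -- find a nonzero solution of the Vandermonde system
  set A : Matrix (Fin n) (Fin (n+1)) ℂ := Matrix.of fun k i => μ i ^ (k : ℕ) with hA
  obtain ⟨w, hwker, hwne⟩ : ∃ w, w ∈ LinearMap.ker A.mulVecLin ∧ w ≠ 0 := by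
    have hne : LinearMap.ker A.mulVecLin ≠ ⊥ := by
      intro hbot
      have hinj : Function.Injective A.mulVecLin := by
        rw [← LinearMap.ker_eq_bot]; exact hbot
      have hle := LinearMap.finrank_le_finrank_of_injective hinj
      simp only [Module.finrank_fintype_fun_eq_card, Fintype.card_fin] at hle
      omega
    exact (Submodule.ne_bot_iff _).mp hne
  have hw0 : ∀ k : ℕ, k < n → ∑ i, μ i ^ k * w i = 0 := by
    intro k hk
    have h := congrFun (LinearMap.mem_ker.mp hwker) ⟨k, hk⟩
    simpa [hA, Matrix.mulVecLin_apply, Matrix.mulVec, dotProduct] using h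
  -- every coordinate of w is nonzero
  have hwall : ∀ i, w i ≠ 0 := by
    intro i0 hwi0
    apply hwne
    have hν : Function.Injective (μ ∘ i0.succAbove) :=
      hμ.comp Fin.succAbove_right_injective
    have hdet : (Matrix.vandermonde (μ ∘ i0.succAbove)).det ≠ 0 :=
      Matrix.det_vandermonde_ne_zero_iff.mpr hν
    have hwz : ∀ j : Fin n, w (i0.succAbove j) = 0 := by
      have hmv : (Matrix.vandermonde (μ ∘ i0.succAbove)).transpose.mulVec
          (fun j => w (i0.succAbove j)) = 0 := by
        funext k
        have hk := hw0 (k : ℕ) k.isLt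
        rw [Fin.sum_univ_succAbove _ i0] at hk
        rw [hwi0, mul_zero, zero_add] at hk
        simpa [Matrix.mulVec, dotProduct, Matrix.vandermonde] using hk
      have hinj2 : Function.Injective (Matrix.vandermonde (μ ∘ i0.succAbove)).transpose.mulVec := by
        rw [Matrix.mulVec_injective_iff_isUnit, Matrix.isUnit_iff_isUnit_det,
          Matrix.det_transpose]
        exact hdet.isUnit
      have h0 : (fun j => w (i0.succAbove j)) = 0 :=
        hinj2 (by rw [hmv, Matrix.mulVec_zero])
      exact fun j => congrFun h0 j
    funext i
    simp only [Pi.zero_apply]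
    rcases eq_or_ne i i0 with rfl | hne
    · exact hwi0
    · obtain ⟨j, rfl⟩ := Fin.exists_succAbove_eq hne
      exact hwz j
  -- choose square roots
  have hsq : ∀ i, ∃ z : ℂ, z ^ 2 = w i / B (b i) (b i) := fun i =>
    IsAlgClosed.exists_pow_nat_eq _ two_pos
  choose a ha using hsq
  have haw : ∀ i, a i ^ 2 * B (b i) (b i) = w i := fun i => by
    rw [ha i, div_mul_cancel₀ _ (hd i)]
  have hane : ∀ i, a i ≠ 0 := by
    intro i h
    apply hwall i
    rw [← haw i, h]
    ring
  -- the Krylov family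
  set f : ℕ → Q := fun k => ∑ i, (μ i ^ k * a i) • b i with hf
  have hcf : ∀ k, c (f k) = f (k + 1) := by
    intro k
    show c (∑ i, (μ i ^ k * a i) • b i) = ∑ i, (μ i ^ (k+1) * a i) • b i
    rw [map_sum]
    refine Finset.sum_congr rfl fun i _ => ?_
    rw [map_smul, heig i, smul_smul]
    congr 1
    ring
  have expand : ∀ (y : Q) (k : ℕ), B (f k) y = ∑ i, (μ i ^ k * a i) * B (b i) y := by
    intro y k
    show B (∑ i, (μ i ^ k * a i) • b i) y = _
    rw [map_sum, LinearMap.sum_apply]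
    exact Finset.sum_congr rfl fun i _ => by rw [map_smul, LinearMap.smul_apply, smul_eq_mul]
  have hBfb : ∀ (l : ℕ) (i : Fin (n+1)), B (b i) (f l) = (μ i ^ l * a i) * B (b i) (b i) := by
    intro l i
    show B (b i) (∑ j, (μ j ^ l * a j) • b j) = _
    rw [map_sum, Finset.sum_eq_single i]
    · rw [map_smul, smul_eq_mul]
    · intro j _ hj
      rw [map_smul, horth i j (Ne.symm hj), smul_zero]
    · intro h; exact absurd (Finset.mem_univ i) h
  have hBff : ∀ k l : ℕ, k + l < n → B (f k) (f l) = 0 := by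
    intro k l hkl
    rw [expand]
    have hterm : ∀ i : Fin (n+1), (μ i ^ k * a i) * B (b i) (f l) = μ i ^ (k + l) * w i := by
      intro i
      rw [hBfb, ← haw i]
      ring
    rw [Finset.sum_congr rfl fun i _ => hterm i]
    exact hw0 (k + l) hkl
  -- linear independence of the full Krylov family
  set M : Matrix (Fin (n+1)) (Fin (n+1)) ℂ := Matrix.of fun k i => μ i ^ (k : ℕ) * a i with hMdef
  have hMunit : IsUnit M := by
    have heq : M = (Matrix.vandermonde μ).transpose * Matrix.diagonal a := by
      ext k i
      rw [Matrix.mul_diagonal]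
      simp [hMdef, Matrix.vandermonde]
    rw [Matrix.isUnit_iff_isUnit_det, heq, Matrix.det_mul, Matrix.det_transpose,
      Matrix.det_diagonal]
    exact ((isUnit_iff_ne_zero.mpr (Matrix.det_vandermonde_ne_zero_iff.mpr hμ))).mul
      (isUnit_iff_ne_zero.mpr (Finset.prod_ne_zero_iff.mpr fun i _ => hane i))
  have hliM : LinearIndependent ℂ (fun k : Fin (n+1) => M k) :=
    Matrix.linearIndependent_rows_iff_isUnit.mpr hMunit
  have hliF : LinearIndependent ℂ (fun k : Fin (n+1) => f (k : ℕ)) := by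
    have heq : (fun k : Fin (n+1) => f (k : ℕ)) =
        fun k : Fin (n+1) => b.equivFun.symm (M k) := by
      funext k
      rw [Module.Basis.equivFun_symm_apply]
      rfl
    rw [heq]
    exact hliM.map' b.equivFun.symm.toLinearMap b.equivFun.symm.ker
  have hmn : m ≤ n + 1 := by omega
  have hliFm : LinearIndependent ℂ (fun k : Fin m => f (k : ℕ)) := by
    have hcomp : (fun k : Fin m => f (k : ℕ)) =
        (fun k : Fin (n+1) => f (k : ℕ)) ∘ (Fin.castLE hmn) := by
      funext k; rfl
    rw [hcomp]
    exact hliF.comp _ (Fin.castLE_injective hmn)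
  set L : Submodule ℂ Q := Submodule.span ℂ (Set.range fun k : Fin m => f (k : ℕ)) with hL
  have hLrank : Module.finrank ℂ L = m := by
    rw [hL, finrank_span_eq_card hliFm, Fintype.card_fin]
  have hLiso : ∀ u ∈ L, ∀ v ∈ L, B u v = 0 := by
    intro u hu v hv
    refine Submodule.span_induction₂ (p := fun x y _ _ => B x y = 0) ?_ ?_ ?_ ?_ ?_ ?_ ?_ hu hv
    · rintro x y ⟨k, rfl⟩ ⟨l, rfl⟩
      refine hBff _ _ ?_
      have hk := k.isLt
      have hl := l.isLt
      omega
    · intro y _; simp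
    · intro x _; simp
    · intro x y z _ _ _ h1 h2; rw [map_add, LinearMap.add_apply, h1, h2, add_zero]
    · intro x y z _ _ _ h1 h2; rw [map_add, h1, h2, add_zero]
    · intro s x y _ _ h; rw [map_smul, LinearMap.smul_apply, h, smul_zero]
    · intro s x y _ _ h; rw [map_smul, h, smul_zero]
  have hfmem : ∀ k : ℕ, k < m → f k ∈ L := by
    intro k hk
    apply Submodule.subset_span
    exact ⟨⟨k, hk⟩, rfl⟩
  have hmap : Submodule.map c L ≤ L ⊔ (ℂ ∙ f m) := by
    rw [hL, Submodule.map_span, Submodule.span_le]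
    rintro y ⟨x, ⟨k, rfl⟩, rfl⟩
    rw [hcf]
    rcases lt_or_eq_of_le (Nat.succ_le_of_lt k.isLt) with h | h
    · exact Submodule.mem_sup_left (hfmem _ h)
    · rw [show (k : ℕ) + 1 = m from h]
      exact Submodule.mem_sup_right (Submodule.mem_span_singleton_self _)
  have hrange1 : LinearMap.range (L.mkQ.comp (c.domRestrict L)) ≤ ℂ ∙ (L.mkQ (f m)) := by
    rw [LinearMap.range_comp, LinearMap.range_domRestrict]
    refine le_trans (Submodule.map_mono hmap) ?_
    rw [Submodule.map_sup, Submodule.mkQ_map_self, bot_sup_eq, Submodule.map_span,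
      Set.image_singleton]
  have hrle : Module.finrank ℂ (LinearMap.range (L.mkQ.comp (c.domRestrict L))) ≤ 1 := by
    refine le_trans (Submodule.finrank_mono hrange1) ?_
    by_cases h : L.mkQ (f m) = 0
    · rw [h, Submodule.span_zero_singleton]
      simp
    · rw [finrank_span_singleton h]
  have hmem : (Module.finrank ℂ (LinearMap.range (L.mkQ.comp (c.domRestrict L)))) ∈
      {r : ℕ | ∃ L : Submodule ℂ Q,
        (∀ u ∈ L, ∀ v ∈ L, B u v = 0) ∧
        Module.finrank ℂ L = (n+1) / 2 ∧
        Module.finrank ℂ (LinearMap.range (L.mkQ.comp (c.domRestrict L))) = r} :=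
    ⟨L, hLiso, by rw [hLrank]; omega, rfl⟩
  have h1r : 1 ≤ Module.finrank ℂ (LinearMap.range (L.mkQ.comp (c.domRestrict L))) :=
    hlow _ hmem
  have heq1 : Module.finrank ℂ (LinearMap.range (L.mkQ.comp (c.domRestrict L))) = 1 :=
    le_antisymm hrle h1r
  exact ⟨⟨L, hLiso, by rw [hLrank]; omega, heq1⟩, fun s hs => hlow s hs⟩
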